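/- Let S be a periodic semigroup. If neither N_2^1 nor N_2^ℓ is a divisor of S, then Gr S (the union of all subgroups of S) is a right ideal of S. -/

import Mathlib

/-- The 3-element semigroup N₂¹ = {e,a,0}: e²=e, ea=ae=a, other products 0. -/
inductive N21 | e | a | z
  deriving DecidableEq

instance : Fintype N21 :=
  ⟨{N21.e, N21.a, N21.z}, fun x => by cases x <;> decide⟩

instance : Mul N21 :=
  ⟨fun x y => match x, y with
    | .e, .e => .e
    | .e, .a => .a
    | .a, .e => .a
    | _, _ => .z⟩

instance : Semigroup N21 := ⟨by decide⟩

/-- The 3-element semigroup N₂ˡ = {e,a,0}: e²=e, ea=a, other products 0. -/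
inductive N2l | e | a | z
  deriving DecidableEq

instance : Fintype N2l :=
  ⟨{N2l.e, N2l.a, N2l.z}, fun x => by cases x <;> decide⟩

instance : Mul N2l :=
  ⟨fun x y => match x, y with
    | .e, .e => .e
    | .e, .a => .a
    | _, _ => .z⟩

instance : Semigroup N2l := ⟨by decide⟩

/-- `D` is a divisor of `S`: a homomorphic image of a subsemigroup of `S`. -/
def IsDivisorOf (D S : Type*) [Semigroup D] [Semigroup S] : Prop :=
  ∃ (T : Subsemigroup S) (f : T →ₙ* D), Function.Surjective f

/-- `s` lies in the union of all subgroups of `S`. -/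
def InGrS (S : Type*) [Semigroup S] (s : S) : Prop :=
  ∃ e t : S, e * e = e ∧ e * s = s ∧ s * e = s ∧ s * t = e ∧ t * s = e ∧
    e * t = t ∧ t * e = t

/-- `spow s n = s^(n+1)` in a semigroup. -/
def spow {S : Type*} [Semigroup S] (s : S) : ℕ → S
  | 0 => s
  | n + 1 => spow s n * s

private lemma spow_add {S : Type*} [Semigroup S] (s : S) (m n : ℕ) :
    spow s m * spow s n = spow s (m + n + 1) := by
  induction n with
  | zero => rfl
  | succ n ih =>
    show spow s m * (spow s n * s) = _
    rw [← mul_assoc, ih]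
    rfl

private lemma InGrS_of_spow {S : Type*} [Semigroup S] (y : S) (c : ℕ)
    (h : spow y (c + 1) = y) : InGrS S y := by
  have hp : ∀ a, spow y (a + (c + 1)) = spow y a := by
    intro a; induction a with
    | zero => exact (by simpa using h : spow y (0 + (c + 1)) = y)
    | succ a ih =>
      have e1 : (a + 1) + (c + 1) = (a + (c + 1)) + 1 := by omega
      rw [e1]
      show spow y (a + (c + 1)) * y = spow y a * y
      rw [ih]
  have hred : ∀ a b : ℕ, a = b + (c + 1) → spow y a = spow y b := by
    intro a b hab; rw [hab, hp]
  refine ⟨spow y c, spow y (2 * c), ?_, ?_, ?_, ?_, ?_, ?_, ?_⟩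
  · rw [spow_add, hred (c + c + 1) c (by omega)]
  · show spow y c * y = y
    have : spow y c * y = spow y (c + 1) := rfl
    rw [this, h]
  · have h0 : y * spow y c = spow y 0 * spow y c := rfl
    rw [h0, spow_add, show 0 + c + 1 = c + 1 from by omega, h]
  · have h0 : y * spow y (2 * c) = spow y 0 * spow y (2 * c) := rfl
    rw [h0, spow_add, hred (0 + 2 * c + 1) c (by omega)]
  · have h0 : spow y (2 * c) * y = spow y (2 * c + 1) := rfl
    rw [h0, hred (2 * c + 1) c (by omega)]
  · rw [spow_add, hred (c + 2 * c + 1) (2 * c) (by omega)]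
  · rw [spow_add, hred (2 * c + c + 1) (2 * c) (by omega)]

open Classical in
private noncomputable def fmap {S α : Type*} (e y : S) (v1 v2 v3 : α) (u : S) : α :=
  if u = e then v1 else if u = y then v2 else v3

private lemma fmap_e {S α : Type*} (e y : S) (v1 v2 v3 : α) :
    fmap e y v1 v2 v3 e = v1 := by simp [fmap]

private lemma fmap_y {S α : Type*} {e y : S} (v1 v2 v3 : α) (h : y ≠ e) :
    fmap e y v1 v2 v3 y = v2 := by simp [fmap, h]

private lemma fmap_other {S α : Type*} {e y u : S} (v1 v2 v3 : α)
    (h1 : u ≠ e) (h2 : u ≠ y) : fmap e y v1 v2 v3 u = v3 := by simp [fmap, h1, h2]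

private lemma fmap_ne_v1 {S α : Type*} {e y u : S} {v1 v2 v3 : α}
    (h : u ≠ e) (h2 : v2 ≠ v1) (h3 : v3 ≠ v1) : fmap e y v1 v2 v3 u ≠ v1 := by
  unfold fmap
  split_ifs with hh1 hh2
  exacts [absurd hh1 h, h2, h3]

private lemma N21_e_mul (w : N21) : N21.e * w = w := by cases w <;> rfl
private lemma N21_mul_e (w : N21) : w * N21.e = w := by cases w <;> rfl
private lemma N21_zz (w w' : N21) (h : w ≠ N21.e) (h' : w' ≠ N21.e) :
    w * w' = N21.z := by
  cases w <;> cases w' <;> first | rfl | exact absurd rfl h | exact absurd rfl h'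

private lemma N2l_e_mul (w : N2l) : N2l.e * w = w := by cases w <;> rfl
private lemma N2l_z (w w' : N2l) (h : w ≠ N2l.e) : w * w' = N2l.z := by
  cases w <;> cases w' <;> first | rfl | exact absurd rfl h

/-- In a periodic semigroup with neither N₂¹ nor N₂ˡ as a divisor, the union
of all subgroups is a right ideal. -/
theorem stmt_7 (S : Type*) [Semigroup S]
    (hper : ∀ s : S, ∃ m n : ℕ, m < n ∧ spow s m = spow s n)
    (h1 : ¬ IsDivisorOf N21 S) (h2 : ¬ IsDivisorOf N2l S) :
    ∀ s : S, InGrS S s → ∀ x : S, InGrS S (s * x) := by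
  classical
  rintro s ⟨e, t, he2, hes, hse, hst, hts, het, hte⟩ x
  set y := s * x with hy
  by_cases hcyc : ∃ c : ℕ, spow y (c + 1) = y
  · obtain ⟨c, hc⟩ := hcyc
    exact InGrS_of_spow y c hc
  push_neg at hcyc
  have hey : e * y = y := by rw [hy, ← mul_assoc, hes]
  have heyc : ∀ c, e * spow y c = spow y c := by
    intro c; induction c with
    | zero => exact hey
    | succ c ih =>
      show e * (spow y c * y) = spow y c * y
      rw [← mul_assoc, ih]
  have F2 : ∀ c, spow y c ≠ e := by
    intro c hc
    apply hcyc c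
    show spow y c * y = y
    rw [hc, hey]
  have F3 : ∀ c, spow y c * e ≠ e := by
    intro c hc
    apply hcyc c
    calc spow y (c + 1) = spow y c * y := rfl
      _ = spow y c * (e * y) := by rw [hey]
      _ = (spow y c * e) * y := by rw [mul_assoc]
      _ = e * y := by rw [hc]
      _ = y := hey
  have hyne : y ≠ e := F2 0
  exfalso
  by_cases hA : y * e = y
  · -- Case A: N21 is a divisor
    have hsce : ∀ c, spow y c * e = spow y c := by
      intro c; induction c with
      | zero => exact hA
      | succ c ih =>
        show (spow y c * y) * e = spow y c * y
        rw [mul_assoc, hA]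
    apply h1
    have hmul : ∀ {a b : S}, a ∈ {u | e = u ∨ ∃ c, spow y c = u} →
        b ∈ {u | e = u ∨ ∃ c, spow y c = u} →
        a * b ∈ {u | e = u ∨ ∃ c, spow y c = u} := by
      rintro a b (rfl | ⟨c, rfl⟩) (rfl | ⟨d, rfl⟩)
      · exact Or.inl he2.symm
      · exact Or.inr ⟨d, (heyc d).symm⟩
      · exact Or.inr ⟨c, (hsce c).symm⟩
      · exact Or.inr ⟨c + d + 1, (spow_add y c d).symm⟩
    refine ⟨{ carrier := {u | e = u ∨ ∃ c, spow y c = u}, mul_mem' := hmul },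
      ⟨fun u => fmap e y N21.e N21.a N21.z u.1, ?_⟩, ?_⟩
    · rintro ⟨a, (rfl | ⟨c, rfl⟩)⟩ ⟨b, (rfl | ⟨d, rfl⟩)⟩
      · show fmap e y N21.e N21.a N21.z (e * e) =
          fmap e y N21.e N21.a N21.z e * fmap e y N21.e N21.a N21.z e
        rw [he2, fmap_e]
        decide
      · show fmap e y N21.e N21.a N21.z (e * spow y d) =
          fmap e y N21.e N21.a N21.z e * fmap e y N21.e N21.a N21.z (spow y d)
        rw [heyc d, fmap_e, N21_e_mul]
      · show fmap e y N21.e N21.a N21.z (spow y c * e) =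
          fmap e y N21.e N21.a N21.z (spow y c) * fmap e y N21.e N21.a N21.z e
        rw [hsce c, fmap_e, N21_mul_e]
      · show fmap e y N21.e N21.a N21.z (spow y c * spow y d) =
          fmap e y N21.e N21.a N21.z (spow y c) * fmap e y N21.e N21.a N21.z (spow y d)
        rw [spow_add,
          N21_zz _ _ (fmap_ne_v1 (F2 c) (by decide) (by decide))
            (fmap_ne_v1 (F2 d) (by decide) (by decide)),
          fmap_other _ _ _ (F2 (c + d + 1)) (hcyc (c + d))]
    · intro n
      cases n with
      | e => exact ⟨⟨e, Or.inl rfl⟩, fmap_e e y _ _ _⟩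
      | a => exact ⟨⟨y, Or.inr ⟨0, rfl⟩⟩, fmap_y _ _ _ hyne⟩
      | z => exact ⟨⟨spow y 1, Or.inr ⟨1, rfl⟩⟩,
          fmap_other _ _ _ (F2 1) (hcyc 0)⟩
  · -- Case B: N2l is a divisor
    have F4 : ∀ c, spow y c * e ≠ y := by
      intro c hc
      apply hA
      calc y * e = (spow y c * e) * e := by rw [hc]
        _ = spow y c * (e * e) := by rw [mul_assoc]
        _ = spow y c * e := by rw [he2]
        _ = y := hc
    apply h2
    have hmul : ∀ {a b : S},
        a ∈ {u | e = u ∨ (∃ c, spow y c = u) ∨ (∃ c, spow y c * e = u)} →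
        b ∈ {u | e = u ∨ (∃ c, spow y c = u) ∨ (∃ c, spow y c * e = u)} →
        a * b ∈ {u | e = u ∨ (∃ c, spow y c = u) ∨ (∃ c, spow y c * e = u)} := by
      rintro a b (rfl | ⟨c, rfl⟩ | ⟨c, rfl⟩) (rfl | ⟨d, rfl⟩ | ⟨d, rfl⟩)
      · exact Or.inl he2.symm
      · exact Or.inr (Or.inl ⟨d, (heyc d).symm⟩)
      · refine Or.inr (Or.inr ⟨d, ?_⟩)
        symm; rw [← mul_assoc, heyc]
      · exact Or.inr (Or.inr ⟨c, rfl⟩)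
      · exact Or.inr (Or.inl ⟨c + d + 1, (spow_add y c d).symm⟩)
      · refine Or.inr (Or.inr ⟨c + d + 1, ?_⟩)
        symm; rw [← mul_assoc, spow_add]
      · refine Or.inr (Or.inr ⟨c, ?_⟩)
        symm; rw [mul_assoc, he2]
      · refine Or.inr (Or.inl ⟨c + d + 1, ?_⟩)
        symm; rw [mul_assoc, heyc, spow_add]
      · refine Or.inr (Or.inr ⟨c + d + 1, ?_⟩)
        symm; rw [mul_assoc, ← mul_assoc e, heyc, ← mul_assoc, spow_add]
    refine ⟨{ carrier := {u | e = u ∨ (∃ c, spow y c = u) ∨ (∃ c, spow y c * e = u)}, mul_mem' := hmul },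
      ⟨fun u => fmap e y N2l.e N2l.a N2l.z u.1, ?_⟩, ?_⟩
    · rintro ⟨a, (rfl | ⟨c, rfl⟩ | ⟨c, rfl⟩)⟩ ⟨b, (rfl | ⟨d, rfl⟩ | ⟨d, rfl⟩)⟩
      · show fmap e y N2l.e N2l.a N2l.z (e * e) =
          fmap e y N2l.e N2l.a N2l.z e * fmap e y N2l.e N2l.a N2l.z e
        rw [he2, fmap_e]
        decide
      · show fmap e y N2l.e N2l.a N2l.z (e * spow y d) =
          fmap e y N2l.e N2l.a N2l.z e * fmap e y N2l.e N2l.a N2l.z (spow y d)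
        rw [heyc d, fmap_e, N2l_e_mul]
      · show fmap e y N2l.e N2l.a N2l.z (e * (spow y d * e)) =
          fmap e y N2l.e N2l.a N2l.z e * fmap e y N2l.e N2l.a N2l.z (spow y d * e)
        rw [← mul_assoc, heyc, fmap_e, N2l_e_mul]
      · show fmap e y N2l.e N2l.a N2l.z (spow y c * e) =
          fmap e y N2l.e N2l.a N2l.z (spow y c) * fmap e y N2l.e N2l.a N2l.z e
        rw [fmap_e, N2l_z _ _ (fmap_ne_v1 (F2 c) (by decide) (by decide)),
          fmap_other _ _ _ (F3 c) (F4 c)]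
      · show fmap e y N2l.e N2l.a N2l.z (spow y c * spow y d) =
          fmap e y N2l.e N2l.a N2l.z (spow y c) * fmap e y N2l.e N2l.a N2l.z (spow y d)
        rw [spow_add, N2l_z _ _ (fmap_ne_v1 (F2 c) (by decide) (by decide)),
          fmap_other _ _ _ (F2 (c + d + 1)) (hcyc (c + d))]
      · show fmap e y N2l.e N2l.a N2l.z (spow y c * (spow y d * e)) =
          fmap e y N2l.e N2l.a N2l.z (spow y c) * fmap e y N2l.e N2l.a N2l.z (spow y d * e)
        rw [← mul_assoc, spow_add,
          N2l_z _ _ (fmap_ne_v1 (F2 c) (by decide) (by decide)),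
          fmap_other _ _ _ (F3 (c + d + 1)) (F4 (c + d + 1))]
      · show fmap e y N2l.e N2l.a N2l.z ((spow y c * e) * e) =
          fmap e y N2l.e N2l.a N2l.z (spow y c * e) * fmap e y N2l.e N2l.a N2l.z e
        rw [mul_assoc, he2, N2l_z _ _ (fmap_ne_v1 (F3 c) (by decide) (by decide)),
          fmap_other _ _ _ (F3 c) (F4 c)]
      · show fmap e y N2l.e N2l.a N2l.z ((spow y c * e) * spow y d) =
          fmap e y N2l.e N2l.a N2l.z (spow y c * e) * fmap e y N2l.e N2l.a N2l.z (spow y d)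
        rw [mul_assoc, heyc, spow_add,
          N2l_z _ _ (fmap_ne_v1 (F3 c) (by decide) (by decide)),
          fmap_other _ _ _ (F2 (c + d + 1)) (hcyc (c + d))]
      · show fmap e y N2l.e N2l.a N2l.z ((spow y c * e) * (spow y d * e)) =
          fmap e y N2l.e N2l.a N2l.z (spow y c * e) * fmap e y N2l.e N2l.a N2l.z (spow y d * e)
        rw [mul_assoc, ← mul_assoc e, heyc, ← mul_assoc, spow_add,
          N2l_z _ _ (fmap_ne_v1 (F3 c) (by decide) (by decide)),
          fmap_other _ _ _ (F3 (c + d + 1)) (F4 (c + d + 1))]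
    · intro n
      cases n with
      | e => exact ⟨⟨e, Or.inl rfl⟩, fmap_e e y _ _ _⟩
      | a => exact ⟨⟨y, Or.inr (Or.inl ⟨0, rfl⟩)⟩, fmap_y _ _ _ hyne⟩
      | z => exact ⟨⟨spow y 1, Or.inr (Or.inl ⟨1, rfl⟩)⟩,
          fmap_other _ _ _ (F2 1) (hcyc 0)⟩
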